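/- Given a commutative ladder of abelian groups with exact rows B_i → C_i → D_i (vertical transition maps from level i+1 to i), if the inverse systems (B_i) and (C_i) are each a,b-injective and a,b-surjective for some a,b, then the induced sequence of inverse limits lim← B_i → lim← C_i → lim← D_i is exact. -/

import Mathlib

open CategoryTheory Opposite

/-- The transition map from level `j` to level `i` (for `i ≤ j`) of an inverse system of
abelian groups indexed by `ℕ`. -/
noncomputable def InvSys.trans (F : ℕᵒᵖ ⥤ AddCommGrpCat) {i j : ℕ} (h : i ≤ j) :
    F.obj (op j) → F.obj (op i) :=
  F.map (homOfLE h).op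

/-- `a,b`-injectivity of an inverse system of abelian groups. -/
def InvSys.IsInjective (F : ℕᵒᵖ ⥤ AddCommGrpCat) (a b : ℕ) : Prop :=
  ∀ c (_ : a ≤ c), ∀ x : F.obj (op (b + c)),
    InvSys.trans F (by omega : a ≤ b + c) x = 0 →
    InvSys.trans F (by omega : c ≤ b + c) x = 0

/-- `a,b`-surjectivity of an inverse system of abelian groups. -/
def InvSys.IsSurjective (F : ℕᵒᵖ ⥤ AddCommGrpCat) (a b : ℕ) : Prop :=
  ∀ c (_ : a ≤ c), ∀ x : F.obj (op c),
    (∃ y : F.obj (op (b + c)), InvSys.trans F (by omega : c ≤ b + c) y = x) →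
    ∀ d (_ : c ≤ d), ∃ z : F.obj (op d), InvSys.trans F (by omega : c ≤ d) z = x

/-- The inverse limit `lim← A_i` of an inverse sequence of abelian groups, realized as the
subgroup of the product consisting of compatible sequences. -/
noncomputable def InvSys.invLim (F : ℕᵒᵖ ⥤ AddCommGrpCat) :
    AddSubgroup (Π i : ℕ, F.obj (op i)) where
  carrier := {x | ∀ i : ℕ, F.map (homOfLE (Nat.le_succ i)).op (x (i + 1)) = x i}
  zero_mem' := by intro i; simp [map_zero]
  add_mem' := by intro x y hx hy i; simp [map_add, hx i, hy i]
  neg_mem' := by intro x hx i; simp [map_neg, hx i]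

/-- The homomorphism induced on inverse limits by a morphism of inverse systems. -/
noncomputable def InvSys.limMap {F G : ℕᵒᵖ ⥤ AddCommGrpCat} (η : F ⟶ G) :
    InvSys.invLim F →+ InvSys.invLim G where
  toFun x := ⟨fun i => η.app (op i) (x.1 i), by
    intro i
    have h := ConcreteCategory.congr_hom (η.naturality (homOfLE (Nat.le_succ i)).op) (x.1 (i + 1))
    simp only [comp_apply] at h
    rw [← h, x.2 i]⟩
  map_zero' := by
    ext i
    simp [map_zero]
  map_add' x y := by
    ext i
    simp [map_add]

lemma InvSys.trans_trans (F : ℕᵒᵖ ⥤ AddCommGrpCat) {i j k : ℕ} (hij : i ≤ j) (hjk : j ≤ k)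
    (x : F.obj (op k)) :
    InvSys.trans F hij (InvSys.trans F hjk x) = InvSys.trans F (hij.trans hjk) x := by
  unfold InvSys.trans
  rw [← comp_apply, ← F.map_comp]
  congr 1

lemma InvSys.trans_sub (F : ℕᵒᵖ ⥤ AddCommGrpCat) {i j : ℕ} (h : i ≤ j) (x y : F.obj (op j)) :
    InvSys.trans F h (x - y) = InvSys.trans F h x - InvSys.trans F h y :=
  (F.map (homOfLE h).op).hom.map_sub x y

lemma InvSys.trans_zero (F : ℕᵒᵖ ⥤ AddCommGrpCat) {i j : ℕ} (h : i ≤ j) :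
    InvSys.trans F h (0 : F.obj (op j)) = 0 :=
  (F.map (homOfLE h).op).hom.map_zero

lemma InvSys.trans_natural {F G : ℕᵒᵖ ⥤ AddCommGrpCat} (η : F ⟶ G) {i j : ℕ} (h : i ≤ j)
    (x : F.obj (op j)) :
    η.app (op i) (InvSys.trans F h x) = InvSys.trans G h (η.app (op j) x) := by
  have h2 := ConcreteCategory.congr_hom (η.naturality (homOfLE h).op) x
  simp only [comp_apply] at h2
  exact h2

lemma InvSys.invLim_trans (F : ℕᵒᵖ ⥤ AddCommGrpCat) {x : Π i : ℕ, F.obj (op i)}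
    (hx : x ∈ InvSys.invLim F) {i j : ℕ} (h : i ≤ j) :
    InvSys.trans F h (x j) = x i := by
  induction j, h using Nat.le_induction with
  | base =>
    show F.map (homOfLE (le_refl i)).op (x i) = x i
    have : (homOfLE (le_refl i)).op = 𝟙 (op i) := rfl
    rw [this, F.map_id]; rfl
  | succ j hij ih =>
    have h1 : InvSys.trans F (Nat.le_succ j) (x (j+1)) = x j := hx j
    rw [← InvSys.trans_trans F hij (Nat.le_succ j), h1, ih]

lemma nat_rec_exists {T : ℕ → Sort*} (P : ∀ n, T n → Prop) (R : ∀ n, T n → T (n+1) → Prop)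
    (h0 : ∃ t, P 0 t) (hstep : ∀ n t, P n t → ∃ t', P (n+1) t' ∧ R n t t') :
    ∃ f : ∀ n, T n, (∀ n, P n (f n)) ∧ ∀ n, R n (f n) (f (n+1)) := by
  obtain ⟨t0, ht0⟩ := h0
  choose F hF hR using hstep
  let g : ∀ n, {t : T n // P n t} := fun n =>
    Nat.rec ⟨t0, ht0⟩ (fun n p => ⟨F n p.1 p.2, hF n p.1 p.2⟩) n
  exact ⟨fun n => (g n).1, fun n => (g n).2, fun n => hR n (g n).1 (g n).2⟩


/-- Given a commutative ladder of inverse systems of abelian groups with rows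
`B_i → C_i → D_i` exact at `C_i`, if both `(B_i)` and `(C_i)` are `a,b`-injective and
`a,b`-surjective for some `a, b`, then the induced sequence of inverse limits
`lim← B_i → lim← C_i → lim← D_i` is exact. -/
theorem invLim_exact
    (B C D : ℕᵒᵖ ⥤ AddCommGrpCat) (β : B ⟶ C) (γ : C ⟶ D)
    (hex : ∀ i : ℕ, Function.Exact (β.app (op i)) (γ.app (op i)))
    (a b : ℕ)
    (hBinj : InvSys.IsInjective B a b) (hBsurj : InvSys.IsSurjective B a b)
    (hCinj : InvSys.IsInjective C a b) (hCsurj : InvSys.IsSurjective C a b) :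
    Function.Exact (InvSys.limMap β) (InvSys.limMap γ) := by
  intro y
  constructor
  · intro h
    -- levelwise vanishing of γ y
    have hz : ∀ i : ℕ, γ.app (op i) (y.1 i) = 0 := by
      intro i
      have := congrFun (congrArg Subtype.val h) i
      exact this
    -- levelwise lifts
    have hlift : ∀ i : ℕ, ∃ w : B.obj (op i), β.app (op i) w = y.1 i := by
      intro i
      exact (hex i (y.1 i)).mp (hz i)
    -- key lemma: an element of ker β at level c that comes from b+c levels up can be
    -- lifted to an element of ker β at any level d ≥ c
    have key : ∀ c (_ : a ≤ c) (s : B.obj (op (b + c))),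
        β.app (op c) (InvSys.trans B (by omega) s) = 0 →
        ∀ d (hd : c ≤ d), ∃ z : B.obj (op d),
          β.app (op d) z = 0 ∧ InvSys.trans B hd z = InvSys.trans B (by omega) s := by
      intro c hc s hs d hd
      obtain ⟨w, hw⟩ := hBsurj c hc (InvSys.trans B (by omega) s) ⟨s, rfl⟩ (b + d) (by omega)
      have h1 : InvSys.trans C (show d ≤ b + d by omega) (β.app (op (b + d)) w) = 0 := by
        apply hCinj d (hc.trans hd)
        have h2 : InvSys.trans C (show c ≤ b + d by omega) (β.app (op (b + d)) w) = 0 := by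
          rw [← InvSys.trans_natural β, hw, hs]
        rw [← InvSys.trans_trans C (show a ≤ c by omega) (show c ≤ b + d by omega), h2,
          InvSys.trans_zero]
      refine ⟨InvSys.trans B (show d ≤ b + d by omega) w, ?_, ?_⟩
      · rw [InvSys.trans_natural β, h1]
      · rw [InvSys.trans_trans B hd (show d ≤ b + d by omega)]
        exact hw
    -- recursive construction of compatible lifts from b + (a + n) levels up
    obtain ⟨v, hv, hvR⟩ := nat_rec_exists
      (T := fun n => B.obj (op (b + (a + n))))
      (fun n t => β.app (op (b + (a + n))) t = y.1 (b + (a + n)))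
      (fun n t t' => InvSys.trans B (show a + n ≤ b + (a + (n+1)) by omega) t'
        = InvSys.trans B (show a + n ≤ b + (a + n) by omega) t)
      (hlift (b + (a + 0)))
      (by
        intro n t ht
        obtain ⟨w, hw⟩ := hlift (b + (a + (n+1)))
        -- correction term
        have hs : β.app (op (a + n))
            (InvSys.trans B (show a + n ≤ b + (a + n) by omega)
              (InvSys.trans B (show b + (a + n) ≤ b + (a + (n+1)) by omega) w - t)) = 0 := by
          rw [InvSys.trans_sub, (β.app _).hom.map_sub,
            InvSys.trans_trans B (show a + n ≤ b + (a + n) by omega)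
              (show b + (a + n) ≤ b + (a + (n+1)) by omega),
            InvSys.trans_natural β, InvSys.trans_natural β, ht, hw,
            InvSys.invLim_trans C y.2, InvSys.invLim_trans C y.2, sub_self]
        obtain ⟨z, hz0, hz1⟩ := key (a + n) (by omega)
          (InvSys.trans B (show b + (a + n) ≤ b + (a + (n+1)) by omega) w - t) hs
          (b + (a + (n+1))) (by omega)
        refine ⟨w - z, ?_, ?_⟩
        · show β.app (op (b + (a + (n+1)))) (w - z) = y.1 (b + (a + (n+1)))
          rw [(β.app _).hom.map_sub, hw, hz0, sub_zero]
        · show InvSys.trans B (show a + n ≤ b + (a + (n+1)) by omega) (w - z)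
            = InvSys.trans B (show a + n ≤ b + (a + n) by omega) t
          rw [InvSys.trans_sub, hz1, InvSys.trans_sub,
            InvSys.trans_trans B (show a + n ≤ b + (a + n) by omega)
              (show b + (a + n) ≤ b + (a + (n+1)) by omega)]
          exact sub_sub_cancel _ _)
    -- assemble the element of lim B
    have hvR' : ∀ n, InvSys.trans B (show a + n ≤ b + (a + (n+1)) by omega) (v (n+1))
        = InvSys.trans B (show a + n ≤ b + (a + n) by omega) (v n) := hvR
    refine ⟨⟨fun i => InvSys.trans B (show i ≤ b + (a + i) by omega) (v i), ?_⟩, ?_⟩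
    · intro i
      show InvSys.trans B (Nat.le_succ i)
        (InvSys.trans B (show i + 1 ≤ b + (a + (i+1)) by omega) (v (i+1)))
        = InvSys.trans B (show i ≤ b + (a + i) by omega) (v i)
      rw [InvSys.trans_trans B (Nat.le_succ i) (show i + 1 ≤ b + (a + (i+1)) by omega),
        ← InvSys.trans_trans B (show i ≤ a + i by omega)
          (show a + i ≤ b + (a + (i+1)) by omega), hvR' i,
        InvSys.trans_trans B (show i ≤ a + i by omega) (show a + i ≤ b + (a + i) by omega)]
    · apply Subtype.ext
      funext i
      show β.app (op i) (InvSys.trans B (show i ≤ b + (a + i) by omega) (v i)) = y.1 i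
      rw [InvSys.trans_natural β, hv i, InvSys.invLim_trans C y.2]
  · rintro ⟨z, rfl⟩
    apply Subtype.ext
    funext i
    exact (hex i).apply_apply_eq_zero (z.1 i)
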